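/- arXiv:1512.03257 — 4 statements merged into one kernel-verified Lean document; each statement's English description precedes it below -/
import Mathlib

section
/- Weak duality: for any $\rho(\mathbf{s}|a) \in \mathcal{V}(P)$ and any multipliers $\lambda(s,a,b)$ satisfying $F_\lambda(\mathbf{s}) = \sum_a \rho(a)e^{\sum_b\lambda(s_b,a,b)} \le 1$ for all $\mathbf{s}$, one has $\sum_{s,a,b}P(s|a,b)\rho(a)\lambda(s,a,b) \le I(A;\mathbf{S})$, where $I(A;\mathbf{S})$ is the mutual information of the joint distribution $\rho(\mathbf{s}|a)\rho(a)$. -/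
open Finset

/-- Weak duality: if `ρ ∈ 𝒱(P)` and `F_λ(𝐬) ≤ 1` for all `𝐬`, then
`∑ P(s|a,b)ρ(a)λ(s,a,b) ≤ I(A;𝐒)`. -/
theorem stmt_12 {S A B : Type*} [Fintype S] [Fintype A] [Fintype B]
    [DecidableEq S] [DecidableEq B]
    (P : S → A → B → ℝ)
    (p : A → ℝ) (hp : ∀ a, 0 ≤ p a) (hp1 : ∑ a, p a = 1)
    (ρ : A → (B → S) → ℝ)
    (hρnn : ∀ a σ, 0 ≤ ρ a σ) (hρn : ∀ a, ∑ σ, ρ a σ = 1)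
    (hmarg : ∀ a b s,
      ∑ σ ∈ Finset.univ.filter (fun σ : B → S => σ b = s), ρ a σ = P s a b)
    (lam : S → A → B → ℝ)
    (hfeas : ∀ σ : B → S, (∑ a, p a * Real.exp (∑ b, lam (σ b) a b)) ≤ 1) :
    (∑ s, ∑ a, ∑ b, P s a b * p a * lam s a b) ≤
      ∑ σ : B → S, ∑ a, ρ a σ * p a *
        Real.log (ρ a σ / ∑ a', ρ a' σ * p a') := by
  -- Step 1: rewrite the LHS as a sum over σ
  have key : ∀ a b, ∑ s, P s a b * p a * lam s a b
      = ∑ σ : B → S, ρ a σ * p a * lam (σ b) a b := by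
    intro a b
    rw [← Finset.sum_fiberwise Finset.univ (fun σ : B → S => σ b)
      (fun σ => ρ a σ * p a * lam (σ b) a b)]
    refine Finset.sum_congr rfl fun s _ => ?_
    rw [← hmarg a b s, Finset.sum_mul, Finset.sum_mul]
    refine Finset.sum_congr rfl fun σ hσ => ?_
    simp only [Finset.mem_filter] at hσ
    rw [hσ.2]
  have step1 : (∑ s, ∑ a, ∑ b, P s a b * p a * lam s a b)
      = ∑ σ : B → S, ∑ a, ρ a σ * p a * (∑ b, lam (σ b) a b) := by
    rw [Finset.sum_comm]
    have : ∀ a, ∑ s, ∑ b, P s a b * p a * lam s a b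
        = ∑ σ : B → S, ρ a σ * p a * (∑ b, lam (σ b) a b) := by
      intro a
      rw [Finset.sum_comm]
      calc ∑ b, ∑ s, P s a b * p a * lam s a b
          = ∑ b, ∑ σ : B → S, ρ a σ * p a * lam (σ b) a b := by
            exact Finset.sum_congr rfl fun b _ => key a b
        _ = ∑ σ : B → S, ∑ b, ρ a σ * p a * lam (σ b) a b := Finset.sum_comm
        _ = ∑ σ : B → S, ρ a σ * p a * (∑ b, lam (σ b) a b) := by
            exact Finset.sum_congr rfl fun σ _ => (Finset.mul_sum _ _ _).symm
    rw [Finset.sum_congr rfl fun a _ => this a, Finset.sum_comm]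
  rw [step1]
  -- Step 2: pointwise bound for each σ
  refine Finset.sum_le_sum fun σ _ => ?_
  set R : ℝ := ∑ a', ρ a' σ * p a' with hR
  have hRnn : 0 ≤ R := Finset.sum_nonneg fun a _ => mul_nonneg (hρnn a σ) (hp a)
  have point : ∀ a, ρ a σ * p a * (∑ b, lam (σ b) a b)
      ≤ ρ a σ * p a * Real.log (ρ a σ / R)
        + (p a * Real.exp (∑ b, lam (σ b) a b) * R - ρ a σ * p a) := by
    intro a
    set L : ℝ := ∑ b, lam (σ b) a b
    rcases eq_or_lt_of_le (mul_nonneg (hρnn a σ) (hp a)) with h0 | hxpos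
    · rw [← h0]
      simp only [zero_mul, zero_add, sub_zero]
      exact mul_nonneg (mul_nonneg (hp a) (Real.exp_pos _).le) hRnn
    · have hρpos : 0 < ρ a σ := by
        rcases (mul_pos_iff.mp hxpos) with ⟨h1, _⟩ | ⟨h1, h2⟩
        · exact h1
        · exact absurd (hp a) (not_le.mpr h2)
      have hRpos : 0 < R := lt_of_lt_of_le hxpos
        (Finset.single_le_sum (fun a' _ => mul_nonneg (hρnn a' σ) (hp a'))
          (Finset.mem_univ a))
      have ht : 0 < Real.exp L * R / ρ a σ := by positivity
      have hlog := Real.log_le_sub_one_of_pos ht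
      have hlogeq : Real.log (Real.exp L * R / ρ a σ)
          = L - Real.log (ρ a σ / R) := by
        rw [Real.log_div (by positivity) (ne_of_gt hρpos),
          Real.log_mul (Real.exp_ne_zero L) (ne_of_gt hRpos), Real.log_exp,
          Real.log_div (ne_of_gt hρpos) (ne_of_gt hRpos)]
        ring
      rw [hlogeq] at hlog
      have := mul_le_mul_of_nonneg_left hlog (le_of_lt hxpos)
      have hxt : ρ a σ * p a * (Real.exp L * R / ρ a σ)
          = p a * Real.exp L * R := by
        field_simp
      nlinarith [this]
  calc ∑ a, ρ a σ * p a * (∑ b, lam (σ b) a b)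
      ≤ ∑ a, (ρ a σ * p a * Real.log (ρ a σ / R)
        + (p a * Real.exp (∑ b, lam (σ b) a b) * R - ρ a σ * p a)) :=
        Finset.sum_le_sum fun a _ => point a
    _ = (∑ a, ρ a σ * p a * Real.log (ρ a σ / R))
        + ((∑ a, p a * Real.exp (∑ b, lam (σ b) a b)) * R - R) := by
        rw [Finset.sum_add_distrib, Finset.sum_sub_distrib, Finset.sum_mul, hR]
    _ ≤ ∑ a, ρ a σ * p a * Real.log (ρ a σ / R) := by
        have := hfeas σ
        nlinarith [hfeas σ, hRnn]
end

section
/- Optimality conditions: suppose $\rho(\mathbf{s}|a) \in \mathcal{V}(P)$ and multipliers $\lambda(s,a,b)$ satisfy (i) $\rho(\mathbf{s}|a) = \rho(\mathbf{s})e^{\sum_b\lambda(s_b,a,b)}$ with $\rho(\mathbf{s}) = \sum_a\rho(\mathbf{s}|a)\rho(a)$ and (ii) $F_\lambda(\mathbf{s}) \le 1$ for all $\mathbf{s}$. Then the dual value equals the primal value, $\sum_{s,a,b}P(s|a,b)\rho(a)\lambda(s,a,b) = I(A;\mathbf{S})$, and hence $\rho(\mathbf{s}|a)$ minimizes $I(A;\mathbf{S})$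 over $\mathcal{V}(P)$. -/
open Finset

/-- Elementary inequality: `t - u ≤ t log(t/u)` for positive `t, u`. -/
lemma aux_log_ineq (t u : ℝ) (ht : 0 < t) (hu : 0 < u) :
    t - u ≤ t * Real.log (t / u) := by
  have h := Real.log_le_sub_one_of_pos (show (0:ℝ) < u / t by positivity)
  have hlog : Real.log (t / u) = - Real.log (u / t) := by
    rw [← Real.log_inv]
    congr 1
    field_simp
  rw [hlog]
  have h2 : u / t * t = u := div_mul_cancel₀ u ht.ne'
  nlinarith

/-- Rewriting the dual value through any element of `𝒱(P)`. -/
lemma aux_dual_eq {S A B : Type*} [Fintype S] [Fintype A] [Fintype B]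
    [DecidableEq S] [DecidableEq B]
    (P : S → A → B → ℝ) (p : A → ℝ) (lam : S → A → B → ℝ)
    (τ : A → (B → S) → ℝ)
    (hc : ∀ a b s, ∑ σ ∈ Finset.univ.filter (fun σ : B → S => σ b = s), τ a σ
        = P s a b) :
    (∑ s, ∑ a, ∑ b, P s a b * p a * lam s a b)
      = ∑ σ : B → S, ∑ a, τ a σ * p a * ∑ b, lam (σ b) a b := by
  have step : ∀ a b, (∑ s, P s a b * p a * lam s a b)
      = ∑ σ : B → S, τ a σ * p a * lam (σ b) a b := by
    intro a b
    rw [← Finset.sum_fiberwise Finset.univ (fun σ : B → S => σ b) 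
        (fun σ => τ a σ * p a * lam (σ b) a b)]
    refine Finset.sum_congr rfl fun s _ => ?_
    rw [← hc a b s, Finset.sum_mul, Finset.sum_mul]
    refine Finset.sum_congr rfl fun σ hσ => ?_
    have : σ b = s := (Finset.mem_filter.mp hσ).2
    rw [this]
  calc ∑ s, ∑ a, ∑ b, P s a b * p a * lam s a b
      = ∑ a, ∑ b, ∑ s, P s a b * p a * lam s a b := by
        rw [Finset.sum_comm]
        exact Finset.sum_congr rfl fun a _ => Finset.sum_comm
    _ = ∑ a, ∑ b, ∑ σ : B → S, τ a σ * p a * lam (σ b) a b := by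
        exact Finset.sum_congr rfl fun a _ => Finset.sum_congr rfl fun b _ => step a b
    _ = ∑ a, ∑ σ : B → S, ∑ b, τ a σ * p a * lam (σ b) a b :=
        Finset.sum_congr rfl fun a _ => Finset.sum_comm
    _ = ∑ σ : B → S, ∑ a, ∑ b, τ a σ * p a * lam (σ b) a b := Finset.sum_comm
    _ = ∑ σ : B → S, ∑ a, τ a σ * p a * ∑ b, lam (σ b) a b := by
        exact Finset.sum_congr rfl fun σ _ => Finset.sum_congr rfl fun a _ => by
          rw [Finset.mul_sum]

/-- Optimality conditions: if `ρ ∈ 𝒱(P)`, `ρ(𝐬|a) = ρ(𝐬) e^{∑_b λ(s_b,a,b)}`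
with `ρ(𝐬)` the marginal, and `F_λ(𝐬) ≤ 1`, then the dual value equals the
primal value `I(A;𝐒)` and `ρ` minimizes `I(A;𝐒)` over `𝒱(P)`. -/
theorem stmt_13 {S A B : Type*} [Fintype S] [Fintype A] [Fintype B]
    [DecidableEq S] [DecidableEq B]
    (P : S → A → B → ℝ)
    (p : A → ℝ) (hp : ∀ a, 0 < p a) (hp1 : ∑ a, p a = 1)
    (V : Set (A → (B → S) → ℝ))
    (hV : V = {τ | (∀ a σ, 0 ≤ τ a σ) ∧ (∀ a, ∑ σ, τ a σ = 1) ∧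
      ∀ a b s, ∑ σ ∈ Finset.univ.filter (fun σ : B → S => σ b = s), τ a σ
        = P s a b})
    (ρ : A → (B → S) → ℝ) (hρV : ρ ∈ V)
    (m : (B → S) → ℝ) (hm : ∀ σ, m σ = ∑ a, ρ a σ * p a)
    (lam : S → A → B → ℝ)
    (hform : ∀ a σ, ρ a σ = m σ * Real.exp (∑ b, lam (σ b) a b))
    (hfeas : ∀ σ : B → S, (∑ a, p a * Real.exp (∑ b, lam (σ b) a b)) ≤ 1) :
    (∑ s, ∑ a, ∑ b, P s a b * p a * lam s a b) =
      (∑ σ : B → S, ∑ a, ρ a σ * p a * Real.log (ρ a σ / m σ)) ∧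
    ∀ τ ∈ V,
      (∑ σ : B → S, ∑ a, ρ a σ * p a * Real.log (ρ a σ / m σ)) ≤
        ∑ σ : B → S, ∑ a, τ a σ * p a *
          Real.log (τ a σ / ∑ a', τ a' σ * p a') := by
  rw [hV] at hρV
  obtain ⟨hρ0, hρ1, hρP⟩ := hρV
  -- pointwise identity: ρ a σ * p a * log(ρ a σ / m σ) = ρ a σ * p a * ∑ b, lam
  have hpt : ∀ σ a, ρ a σ * p a * Real.log (ρ a σ / m σ)
      = ρ a σ * p a * ∑ b, lam (σ b) a b := by
    intro σ a
    rcases eq_or_ne (ρ a σ) 0 with h0 | h0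
    · simp [h0]
    · have hmne : m σ ≠ 0 := by
        intro hm0
        apply h0
        rw [hform a σ, hm0, zero_mul]
      have : ρ a σ / m σ = Real.exp (∑ b, lam (σ b) a b) := by
        rw [hform a σ, mul_comm, mul_div_assoc, div_self hmne, mul_one]
      rw [this, Real.log_exp]
  have hdual : (∑ s, ∑ a, ∑ b, P s a b * p a * lam s a b)
      = ∑ σ : B → S, ∑ a, ρ a σ * p a * ∑ b, lam (σ b) a b :=
    aux_dual_eq P p lam ρ hρP
  constructor
  · rw [hdual]
    exact Finset.sum_congr rfl fun σ _ => Finset.sum_congr rfl fun a _ => (hpt σ a).symm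
  · intro τ hτ
    rw [hV] at hτ
    obtain ⟨hτ0, hτ1, hτP⟩ := hτ
    -- primal value of ρ equals dual value, which we bound by primal of τ
    have hIρ : (∑ σ : B → S, ∑ a, ρ a σ * p a * Real.log (ρ a σ / m σ))
        = ∑ σ : B → S, ∑ a, τ a σ * p a * ∑ b, lam (σ b) a b := by
      rw [← aux_dual_eq P p lam τ hτP, hdual]
      exact Finset.sum_congr rfl fun σ _ => Finset.sum_congr rfl fun a _ => hpt σ a
    rw [hIρ]
    set q : (B → S) → ℝ := fun σ => ∑ a', τ a' σ * p a' with hq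
    have hq0 : ∀ σ, 0 ≤ q σ := fun σ =>
      Finset.sum_nonneg fun a _ => mul_nonneg (hτ0 a σ) (hp a).le
    -- pointwise bound
    have hptw : ∀ σ a,
        τ a σ * p a - q σ * (p a * Real.exp (∑ b, lam (σ b) a b))
          ≤ τ a σ * p a * Real.log (τ a σ / q σ)
            - τ a σ * p a * ∑ b, lam (σ b) a b := by
      intro σ a
      rcases eq_or_lt_of_le (hτ0 a σ) with h0 | h0
      · have hnn : 0 ≤ q σ * (p a * Real.exp (∑ b, lam (σ b) a b)) :=
          mul_nonneg (hq0 σ) (mul_nonneg (hp a).le (Real.exp_pos _).le)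
        rw [← h0]
        simp only [zero_mul, zero_sub, sub_self]
        linarith
      · have hqpos : 0 < q σ := by
          have hle : τ a σ * p a ≤ q σ :=
            Finset.single_le_sum (f := fun a' => τ a' σ * p a')
              (fun a' _ => mul_nonneg (hτ0 a' σ) (hp a').le) (Finset.mem_univ a)
          have : 0 < τ a σ * p a := mul_pos h0 (hp a)
          linarith
        set t := τ a σ * p a with ht
        set u := q σ * (p a * Real.exp (∑ b, lam (σ b) a b)) with hu
        have htpos : 0 < t := mul_pos h0 (hp a)
        have hupos : 0 < u := by
          have := Real.exp_pos (∑ b, lam (σ b) a b); have := hp a; positivity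
        have hkey := aux_log_ineq t u htpos hupos
        have hqne : q σ ≠ 0 := hqpos.ne'
        have hpane : p a ≠ 0 := (hp a).ne'
        have hlogeq : Real.log (t / u)
            = Real.log (τ a σ / q σ) - ∑ b, lam (σ b) a b := by
          have heq : t / u = (τ a σ / q σ) / Real.exp (∑ b, lam (σ b) a b) := by
            rw [ht, hu]
            field_simp
          have hne : τ a σ / q σ ≠ 0 := div_ne_zero h0.ne' hqne
          rw [heq, Real.log_div hne (Real.exp_ne_zero _), Real.log_exp]
        rw [hlogeq] at hkey
        calc t - u ≤ t * (Real.log (τ a σ / q σ) - ∑ b, lam (σ b) a b) := hkey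
          _ = t * Real.log (τ a σ / q σ) - t * ∑ b, lam (σ b) a b := by ring
    -- sum the pointwise bounds
    have hsum := Finset.sum_le_sum (fun σ (_ : σ ∈ (Finset.univ : Finset (B → S))) =>
      Finset.sum_le_sum (fun a (_ : a ∈ (Finset.univ : Finset A)) => hptw σ a))
    -- LHS of hsum : ∑ σ ∑ a (t - u) = 1 - ∑ σ q σ * F_λ(σ) ≥ 0
    have hT : (∑ σ : B → S, ∑ a, τ a σ * p a) = 1 := by
      rw [Finset.sum_comm]
      calc ∑ a, ∑ σ : B → S, τ a σ * p a
          = ∑ a, (∑ σ : B → S, τ a σ) * p a := by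
            exact Finset.sum_congr rfl fun a _ => (Finset.sum_mul _ _ _).symm
        _ = ∑ a, p a := by
            exact Finset.sum_congr rfl fun a _ => by rw [hτ1 a, one_mul]
        _ = 1 := hp1
    have hU : (∑ σ : B → S, ∑ a, q σ * (p a * Real.exp (∑ b, lam (σ b) a b))) ≤ 1 := by
      calc ∑ σ : B → S, ∑ a, q σ * (p a * Real.exp (∑ b, lam (σ b) a b))
          = ∑ σ : B → S, q σ * ∑ a, p a * Real.exp (∑ b, lam (σ b) a b) := by
            exact Finset.sum_congr rfl fun σ _ => (Finset.mul_sum _ _ _).symm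
        _ ≤ ∑ σ : B → S, q σ * 1 := by
            refine Finset.sum_le_sum fun σ _ => ?_
            exact mul_le_mul_of_nonneg_left (hfeas σ) (hq0 σ)
        _ = ∑ σ : B → S, ∑ a, τ a σ * p a := by
            exact Finset.sum_congr rfl fun σ _ => by rw [mul_one]
        _ = 1 := hT
    have hnonneg : 0 ≤ ∑ σ : B → S, ∑ a,
        (τ a σ * p a - q σ * (p a * Real.exp (∑ b, lam (σ b) a b))) := by
      have : (∑ σ : B → S, ∑ a,
          (τ a σ * p a - q σ * (p a * Real.exp (∑ b, lam (σ b) a b))))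
          = (∑ σ : B → S, ∑ a, τ a σ * p a)
            - ∑ σ : B → S, ∑ a, q σ * (p a * Real.exp (∑ b, lam (σ b) a b)) := by
        rw [← Finset.sum_sub_distrib]
        exact Finset.sum_congr rfl fun σ _ => Finset.sum_sub_distrib _ _
      rw [this, hT]
      linarith
    have hsplit : (∑ σ : B → S, ∑ a,
        (τ a σ * p a * Real.log (τ a σ / q σ) - τ a σ * p a * ∑ b, lam (σ b) a b))
        = (∑ σ : B → S, ∑ a, τ a σ * p a * Real.log (τ a σ / q σ))
          - ∑ σ : B → S, ∑ a, τ a σ * p a * ∑ b, lam (σ b) a b := by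
      rw [← Finset.sum_sub_distrib]
      exact Finset.sum_congr rfl fun σ _ => Finset.sum_sub_distrib _ _
    have := le_trans hnonneg hsum
    rw [hsplit] at this
    linarith
end

section
/- If $\rho(\mathbf{s}|a) = \rho(\mathbf{s})F_\lambda(\mathbf{s})^{-1}e^{\sum_b\lambda(s_b,a,b)}$ and $\sum_{\mathbf{s}:s_b=s}\rho(\mathbf{s}|a)=P(s|a,b)$, then the mutual information satisfies $I(A;\mathbf{S}) \le \mathcal{C}_+ := \sum_{s,a,b}P(s|a,b)\rho(a)\lambda(s,a,b) - \sum_{\mathbf{s}}\rho(\mathbf{s})\log F_\lambda(\mathbf{s})$, with equality when $\rho(\mathbf{s}) = \sum_a \rho(\mathbf{s}|a)\rho(a)$. -/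
open Finset

/-- Upper bound: if `ρ(𝐬|a) = R(𝐬) F_λ(𝐬)⁻¹ e^{∑_b λ(s_b,a,b)}` satisfies the
marginal constraints, then `I(A;𝐒) ≤ 𝒞₊ = ∑ P(s|a,b)ρ(a)λ(s,a,b)
- ∑_𝐬 R(𝐬) log F_λ(𝐬)`, with equality when `R` is the marginal of the joint. -/
theorem stmt_14 {S A B : Type*} [Fintype S] [Fintype A] [Fintype B]
    [DecidableEq S] [DecidableEq B]
    (P : S → A → B → ℝ)
    (p : A → ℝ) (hp : ∀ a, 0 < p a) (hp1 : ∑ a, p a = 1)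
    (R : (B → S) → ℝ) (hRnn : ∀ σ, 0 ≤ R σ) (hR1 : ∑ σ, R σ = 1)
    (lam : S → A → B → ℝ)
    (F : (B → S) → ℝ)
    (hF : ∀ σ, F σ = ∑ a, p a * Real.exp (∑ b, lam (σ b) a b))
    (ρ : A → (B → S) → ℝ)
    (hform : ∀ a σ, ρ a σ = R σ * (F σ)⁻¹ * Real.exp (∑ b, lam (σ b) a b))
    (hmarg : ∀ a b s,
      ∑ σ ∈ Finset.univ.filter (fun σ : B → S => σ b = s), ρ a σ = P s a b)
    (Cplus : ℝ)
    (hCplus : Cplus = (∑ s, ∑ a, ∑ b, P s a b * p a * lam s a b) -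
      ∑ σ : B → S, R σ * Real.log (F σ)) :
    (∑ σ : B → S, ∑ a, ρ a σ * p a *
        Real.log (ρ a σ / ∑ a', ρ a' σ * p a')) ≤ Cplus ∧
    ((∀ σ, R σ = ∑ a, ρ a σ * p a) →
      (∑ σ : B → S, ∑ a, ρ a σ * p a *
        Real.log (ρ a σ / ∑ a', ρ a' σ * p a')) = Cplus) := by
  have hA : Nonempty A := by
    by_contra h
    rw [not_nonempty_iff] at h
    simp at hp1
  have hFpos : ∀ σ, 0 < F σ := by
    intro σ
    rw [hF]
    exact Finset.sum_pos (fun a _ => mul_pos (hp a) (Real.exp_pos _)) univ_nonempty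
  have hM : ∀ σ, ∑ a', ρ a' σ * p a' = R σ := by
    intro σ
    have h1 : ∀ a, ρ a σ * p a
        = R σ * (F σ)⁻¹ * (p a * Real.exp (∑ b, lam (σ b) a b)) := by
      intro a; rw [hform]; ring
    rw [Finset.sum_congr rfl (fun a _ => h1 a), ← Finset.mul_sum, ← hF σ,
      mul_assoc, inv_mul_cancel₀ (ne_of_gt (hFpos σ)), mul_one]
  have key : (∑ σ : B → S, ∑ a, ρ a σ * p a *
        Real.log (ρ a σ / ∑ a', ρ a' σ * p a')) = Cplus := by
    have hterm : ∀ σ a, ρ a σ * p a * Real.log (ρ a σ / ∑ a', ρ a' σ * p a')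
        = ρ a σ * p a * (∑ b, lam (σ b) a b) - ρ a σ * p a * Real.log (F σ) := by
      intro σ a
      rw [hM σ]
      by_cases hR : R σ = 0
      · simp [hform, hR]
      · have h2 : ρ a σ / R σ = Real.exp (∑ b, lam (σ b) a b) / F σ := by
          rw [hform]
          field_simp
        rw [h2, Real.log_div (Real.exp_ne_zero _) (ne_of_gt (hFpos σ)),
          Real.log_exp]
        ring
    have hsplit : (∑ σ : B → S, ∑ a, ρ a σ * p a *
          Real.log (ρ a σ / ∑ a', ρ a' σ * p a'))
        = (∑ σ : B → S, ∑ a, ρ a σ * p a * (∑ b, lam (σ b) a b))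
          - (∑ σ : B → S, ∑ a, ρ a σ * p a * Real.log (F σ)) := by
      rw [← Finset.sum_sub_distrib]
      refine Finset.sum_congr rfl fun σ _ => ?_
      rw [← Finset.sum_sub_distrib]
      exact Finset.sum_congr rfl fun a _ => hterm σ a
    have hlogF : (∑ σ : B → S, ∑ a, ρ a σ * p a * Real.log (F σ))
        = ∑ σ : B → S, R σ * Real.log (F σ) := by
      refine Finset.sum_congr rfl fun σ _ => ?_
      rw [← Finset.sum_mul, hM σ]
    have hfirst : (∑ σ : B → S, ∑ a, ρ a σ * p a * (∑ b, lam (σ b) a b))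
        = ∑ s, ∑ a, ∑ b, P s a b * p a * lam s a b := by
      have h3 : ∀ s a b, P s a b * p a * lam s a b
          = ∑ σ ∈ Finset.univ.filter (fun σ : B → S => σ b = s),
              ρ a σ * p a * lam (σ b) a b := by
        intro s a b
        rw [← hmarg a b s, Finset.sum_mul, Finset.sum_mul]
        refine Finset.sum_congr rfl fun σ hσ => ?_
        rw [(Finset.mem_filter.mp hσ).2]
      calc (∑ σ : B → S, ∑ a, ρ a σ * p a * (∑ b, lam (σ b) a b))
          = ∑ σ : B → S, ∑ a, ∑ b, ρ a σ * p a * lam (σ b) a b := by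
            refine Finset.sum_congr rfl fun σ _ => Finset.sum_congr rfl fun a _ => ?_
            rw [Finset.mul_sum]
        _ = ∑ a, ∑ b, ∑ σ : B → S, ρ a σ * p a * lam (σ b) a b := by
            rw [Finset.sum_comm]
            exact Finset.sum_congr rfl fun a _ => Finset.sum_comm
        _ = ∑ a, ∑ b, ∑ s, ∑ σ ∈ Finset.univ.filter (fun σ : B → S => σ b = s),
              ρ a σ * p a * lam (σ b) a b := by
            refine Finset.sum_congr rfl fun a _ => Finset.sum_congr rfl fun b _ => ?_
            exact (Finset.sum_fiberwise _ _ _).symm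
        _ = ∑ a, ∑ b, ∑ s, P s a b * p a * lam s a b := by
            refine Finset.sum_congr rfl fun a _ => Finset.sum_congr rfl fun b _ =>
              Finset.sum_congr rfl fun s _ => ?_
            rw [h3 s a b]
        _ = ∑ a, ∑ s, ∑ b, P s a b * p a * lam s a b :=
            Finset.sum_congr rfl fun a _ => Finset.sum_comm
        _ = ∑ s, ∑ a, ∑ b, P s a b * p a * lam s a b := Finset.sum_comm
    rw [hsplit, hlogF, hfirst, hCplus]
  exact ⟨le_of_eq key, fun _ => key⟩
end

section
/- Convergence of Algorithm 2: let $R_0(\mathbf{s}) > 0$ be a positive initial probability distribution, and inductively let $\rho_n(\mathbf{s}|a) \in \mathcal{V}(P)$ minimize $\mathcal{K}[\rho, R_{n-1}] = \sum_{\mathbf{s},a}\rho(\mathbf{s}|a)\rho(a)\log\frac{\rho(\mathbf{s}|a)}{R_{n-1}(\mathbf{s})}$ over $\mathcal{V}(P)$, and set $R_n(\mathbf{s}) = \sum_a\rho_n(\mathbf{s}|a)\rho(a)$. Then the sequence $\mathcal{K}_n = \sum_{\mathbf{s},a}\rho_n(\mathbf{s}|a)\rho(a)\log\frac{\rho_n(\mathbf{s}|a)}{R_n(\mathbf{s})}$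 is nonincreasing and converges to $\mathcal{J}(P) = \min_{\rho\in\mathcal{V}(P)} I(A;\mathbf{S})$. -/
open Finset Filter


private lemma taylor_aux {x y R : ℝ} (hx : 0 < x) (hy : 0 < y) (hR : 0 < R) :
    y * Real.log (y / R) - x * Real.log (x / R) ≤
      (y - x) * (Real.log (x / R) + 1) + (y - x)^2 / x := by
  have h1 : Real.log (y / x) ≤ y / x - 1 :=
    Real.log_le_sub_one_of_pos (div_pos hy hx)
  rw [Real.log_div hy.ne' hx.ne'] at h1
  have h2 : y * (Real.log y - Real.log x) ≤ (y - x) + (y - x)^2 / x := by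
    have h3 : y * (Real.log y - Real.log x) ≤ y * (y / x - 1) :=
      mul_le_mul_of_nonneg_left h1 hy.le
    have h4 : y * (y / x - 1) = (y - x) + (y - x)^2 / x := by
      field_simp; ring
    linarith
  rw [Real.log_div hy.ne' hR.ne', Real.log_div hx.ne' hR.ne']
  nlinarith [h2]

private lemma log_sum_aux {ι : Type*} (s : Finset ι) (f g : ι → ℝ)
    (hf : ∀ i ∈ s, 0 ≤ f i) (hg : ∀ i ∈ s, 0 ≤ g i)
    (hgf : ∀ i ∈ s, g i = 0 → f i = 0) :
    (∑ i ∈ s, f i) * Real.log ((∑ i ∈ s, f i) / (∑ i ∈ s, g i)) ≤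
      ∑ i ∈ s, f i * Real.log (f i / g i) := by
  set F := ∑ i ∈ s, f i with hF
  set G := ∑ i ∈ s, g i with hG
  by_cases hF0 : F = 0
  · have hall : ∀ i ∈ s, f i = 0 := by
      intro i hi
      exact (Finset.sum_eq_zero_iff_of_nonneg hf).1 hF0 i hi
    rw [hF0]
    simp only [zero_mul]
    refine Finset.sum_nonneg fun i hi => ?_
    rw [hall i hi]; simp
  · have hFpos : 0 < F := lt_of_le_of_ne (Finset.sum_nonneg hf) (Ne.symm hF0)
    have hGpos : 0 < G := by
      rcases (lt_or_eq_of_le (Finset.sum_nonneg hg)) with h | h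
      · exact h
      · exfalso; apply hF0
        refine Finset.sum_eq_zero fun i hi => ?_
        exact hgf i hi ((Finset.sum_eq_zero_iff_of_nonneg hg).1 h.symm i hi)
    have key : ∀ i ∈ s, f i * Real.log (F / G) + (f i - g i * (F / G)) ≤
        f i * Real.log (f i / g i) := by
      intro i hi
      rcases eq_or_lt_of_le (hf i hi) with h0 | hpos
      · rw [← h0]
        simp only [zero_mul, zero_sub, zero_add]
        have : 0 ≤ g i * (F / G) := mul_nonneg (hg i hi) (div_pos hFpos hGpos).le
        simp; linarith
      · have hgpos : 0 < g i := by
          rcases eq_or_lt_of_le (hg i hi) with h0 | h; · exact absurd (hgf i hi h0.symm) (by linarith)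
          exact h
        have hlog : Real.log (g i * F / (f i * G)) ≤ g i * F / (f i * G) - 1 :=
          Real.log_le_sub_one_of_pos (by positivity)
        have hsplit : Real.log (f i / g i) = Real.log (F / G) - Real.log (g i * F / (f i * G)) := by
          rw [Real.log_div hpos.ne' hgpos.ne', Real.log_div hFpos.ne' hGpos.ne',
              Real.log_div (by positivity) (by positivity)]
          rw [Real.log_mul (by positivity) (by positivity),
              Real.log_mul (by positivity) (by positivity)]
          ring
        rw [hsplit]
        have h5 : f i * Real.log (g i * F / (f i * G)) ≤ g i * (F/G) - f i := by
          have := mul_le_mul_of_nonneg_left hlog hpos.le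
          have heq : f i * (g i * F / (f i * G) - 1) = g i * (F/G) - f i := by
            field_simp
          linarith
        nlinarith
    have hsum := Finset.sum_le_sum key
    rw [Finset.sum_add_distrib, ← Finset.sum_mul, Finset.sum_sub_distrib, ← Finset.sum_mul] at hsum
    have : G * (F / G) = F := by field_simp
    rw [← hF, ← hG, this] at hsum
    linarith


-- per-coordinate bound used in both perturbation lemmas
private lemma coord_bound {w R x τ t : ℝ} (hw : 0 ≤ w) (hx : 0 ≤ x) (hτ : 0 ≤ τ)
    (hτR : 0 < w → 0 < τ → 0 < R) (hxR : 0 < w → 0 < x → 0 < R)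
    (ht0 : 0 < t) (ht1 : t < 1) :
    w * (((1-t)*x + t*τ) * Real.log (((1-t)*x + t*τ) / R))
      - w * (x * Real.log (x / R)) ≤
    t * (if 0 < x then w * ((τ - x) * (Real.log (x / R) + 1))
          else w * (τ * Real.log (τ / R)))
    + t^2 * (if 0 < x then w * ((τ - x)^2 / x) else 0)
    + (t * Real.log t) * (if 0 < x then 0 else w * τ) := by
  rcases eq_or_lt_of_le hw with hw0 | hwpos
  · rw [← hw0]; simp
  rcases eq_or_lt_of_le hx with hx0 | hxpos
  · -- x = 0
    rw [← hx0]
    simp only [lt_self_iff_false, if_false]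
    rcases eq_or_lt_of_le hτ with hτ0 | hτpos
    · rw [← hτ0]; simp
    · have hR : 0 < R := hτR hwpos hτpos
      have hy : (1-t)*(0:ℝ) + t*τ = t*τ := by ring
      rw [hy]
      have hlog : Real.log (t*τ/R) = Real.log t + Real.log (τ/R) := by
        rw [mul_div_assoc, Real.log_mul ht0.ne' (by positivity)]
      rw [hlog]
      ring_nf
      nlinarith [Real.log_le_sub_one_of_pos ht0]
  · -- x > 0
    rw [if_pos hxpos, if_pos hxpos, if_pos hxpos]
    have hypos : 0 < (1-t)*x + t*τ := by nlinarith
    have hR : 0 < R := hxR hwpos hxpos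
    have h := taylor_aux hxpos hypos hR
    have hyx : (1-t)*x + t*τ - x = t*(τ - x) := by ring
    calc w * (((1-t)*x + t*τ) * Real.log (((1-t)*x + t*τ) / R))
          - w * (x * Real.log (x / R))
        = w * (((1-t)*x + t*τ) * Real.log (((1-t)*x + t*τ) / R)
            - x * Real.log (x / R)) := by ring
      _ ≤ w * ((((1-t)*x + t*τ) - x) * (Real.log (x / R) + 1)
            + (((1-t)*x + t*τ) - x)^2 / x) := mul_le_mul_of_nonneg_left h hwpos.le
      _ = t * (w * ((τ - x) * (Real.log (x / R) + 1)))
            + t^2 * (w * ((τ - x)^2 / x)) + (t * Real.log t) * 0 := by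
          rw [hyx]; field_simp; ring
private lemma min_pos {ι : Type*} [Fintype ι] (w R x τ : ι → ℝ)
    (hw : ∀ i, 0 ≤ w i) (hx : ∀ i, 0 ≤ x i) (hτ : ∀ i, 0 ≤ τ i)
    (hτR : ∀ i, 0 < w i → 0 < τ i → 0 < R i)
    (hxR : ∀ i, 0 < w i → 0 < x i → 0 < R i)
    (hmin : ∀ t : ℝ, 0 < t → t < 1 →
      ∑ i, w i * (x i * Real.log (x i / R i)) ≤
      ∑ i, w i * (((1-t)*x i + t*τ i) * Real.log (((1-t)*x i + t*τ i)/R i))) :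
    ∀ i, 0 < w i → 0 < τ i → 0 < x i := by
  by_contra hbad
  push_neg at hbad
  obtain ⟨i₀, hwi₀, hτi₀, hxi₀⟩ := hbad
  have hxi₀0 : x i₀ = 0 := le_antisymm hxi₀ (hx i₀)
  set cℓ : ι → ℝ := fun i => if 0 < x i then w i * ((τ i - x i) * (Real.log (x i / R i) + 1))
      else w i * (τ i * Real.log (τ i / R i)) with hcℓ
  set cq : ι → ℝ := fun i => if 0 < x i then w i * ((τ i - x i)^2 / x i) else 0 with hcq
  set γ : ι → ℝ := fun i => if 0 < x i then 0 else w i * τ i with hγ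
  have hkey : ∀ t : ℝ, 0 < t → t < 1 →
      (0:ℝ) ≤ t * (∑ i, cℓ i) + t^2 * (∑ i, cq i) + (t * Real.log t) * (∑ i, γ i) := by
    intro t ht0 ht1
    have h1 := hmin t ht0 ht1
    have h2 : ∑ i, (w i * (((1-t)*x i + t*τ i) * Real.log (((1-t)*x i + t*τ i)/R i))
        - w i * (x i * Real.log (x i / R i)))
        ≤ ∑ i, (t * cℓ i + t^2 * cq i + (t * Real.log t) * γ i) := by
      refine Finset.sum_le_sum fun i _ => ?_
      exact coord_bound (hw i) (hx i) (hτ i) (hτR i) (hxR i) ht0 ht1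
    rw [Finset.sum_sub_distrib] at h2
    simp only [Finset.sum_add_distrib, ← Finset.mul_sum] at h2
    linarith
  set Cℓ := ∑ i, cℓ i
  set Cq := ∑ i, cq i
  set Γ := ∑ i, γ i
  have hCq0 : 0 ≤ Cq := Finset.sum_nonneg fun i _ => by
    rw [hcq]; dsimp only; split
    · exact mul_nonneg (hw i) (div_nonneg (sq_nonneg _) (hx i))
    · exact le_rfl
  have hΓpos : 0 < Γ := by
    refine lt_of_lt_of_le ?_ (Finset.single_le_sum (f := γ) (fun i _ => ?_) (Finset.mem_univ i₀))
    · rw [hγ]; dsimp only; rw [if_neg (by rw [hxi₀0]; exact lt_irrefl 0)]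
      exact mul_pos hwi₀ hτi₀
    · rw [hγ]; dsimp only; split
      · exact le_rfl
      · exact mul_nonneg (hw i) (hτ i)
  set t : ℝ := min (1/2) (Real.exp (-(|Cℓ| + Cq + 1)/Γ)) with htdef
  have ht0 : 0 < t := lt_min (by norm_num) (Real.exp_pos _)
  have ht1 : t < 1 := lt_of_le_of_lt (min_le_left _ _) (by norm_num)
  have hlogt : Real.log t ≤ -(|Cℓ| + Cq + 1)/Γ := by
    calc Real.log t ≤ Real.log (Real.exp (-(|Cℓ| + Cq + 1)/Γ)) :=
          Real.log_le_log ht0 (min_le_right _ _)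
      _ = -(|Cℓ| + Cq + 1)/Γ := Real.log_exp _
  have h := hkey t ht0 ht1
  have hb1 : t * Cℓ ≤ t * |Cℓ| := mul_le_mul_of_nonneg_left (le_abs_self _) ht0.le
  have hb2 : t^2 * Cq ≤ t * Cq := by nlinarith [mul_nonneg (mul_nonneg ht0.le (by linarith : (0:ℝ) ≤ 1 - t)) hCq0]
  have hb3 : (t * Real.log t) * Γ ≤ -(t * (|Cℓ| + Cq + 1)) := by
    have := mul_le_mul_of_nonneg_left hlogt (mul_pos ht0 hΓpos).le
    calc (t * Real.log t) * Γ = (t * Γ) * Real.log t := by ring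
      _ ≤ (t * Γ) * (-(|Cℓ| + Cq + 1)/Γ) := mul_le_mul_of_nonneg_left hlogt (mul_pos ht0 hΓpos).le
      _ = -(t * (|Cℓ| + Cq + 1)) := by field_simp
  nlinarith

private lemma min_linearize {ι : Type*} [Fintype ι] (w R x τ : ι → ℝ)
    (hw : ∀ i, 0 ≤ w i) (hx : ∀ i, 0 ≤ x i) (hτ : ∀ i, 0 ≤ τ i)
    (hpos : ∀ i, 0 < w i → 0 < τ i → 0 < x i)
    (hxR : ∀ i, 0 < w i → 0 < x i → 0 < R i)
    (hsum : ∑ i, w i * x i = ∑ i, w i * τ i)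
    (hmin : ∀ t : ℝ, 0 < t → t < 1 →
      ∑ i, w i * (x i * Real.log (x i / R i)) ≤
      ∑ i, w i * (((1-t)*x i + t*τ i) * Real.log (((1-t)*x i + t*τ i)/R i))) :
    ∑ i, w i * (x i * Real.log (x i / R i)) ≤
      ∑ i, w i * (τ i * Real.log (x i / R i)) := by
  set cq : ι → ℝ := fun i => if 0 < x i then w i * ((τ i - x i)^2 / x i) else 0 with hcq
  set Δ := ∑ i, (w i * (τ i * Real.log (x i / R i)) - w i * (x i * Real.log (x i / R i))) with hΔ
  have hkey : ∀ t : ℝ, 0 < t → t < 1 → (0:ℝ) ≤ t * Δ + t^2 * (∑ i, cq i) := by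
    intro t ht0 ht1
    have h2 : ∑ i, (w i * (((1-t)*x i + t*τ i) * Real.log (((1-t)*x i + t*τ i)/R i))
        - w i * (x i * Real.log (x i / R i)))
        ≤ ∑ i, (t * (w i * (τ i - x i) * (Real.log (x i / R i) + 1)) + t^2 * cq i) := by
      refine Finset.sum_le_sum fun i _ => ?_
      rcases eq_or_lt_of_le (hw i) with hw0 | hwpos
      · have hcqi : 0 ≤ cq i := by
          simp only [hcq]
          split
          · exact mul_nonneg (hw i) (div_nonneg (sq_nonneg _) (hx i))
          · exact le_rfl
        rw [← hw0]
        simp only [zero_mul, mul_zero, sub_self, zero_add]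
        exact mul_nonneg (sq_nonneg t) hcqi
      rcases eq_or_lt_of_le (hx i) with hx0 | hxpos
      · -- x i = 0, hence τ i = 0
        have hτ0 : τ i = 0 := by
          by_contra h
          have := hpos i hwpos (lt_of_le_of_ne (hτ i) (Ne.symm h))
          rw [← hx0] at this; exact lt_irrefl 0 this
        rw [hτ0]
        simp only [hcq]
        rw [show x i = 0 from hx0.symm]
        simp
      · have hR := hxR i hwpos hxpos
        have hypos : 0 < (1-t)*x i + t*τ i := by nlinarith [hτ i]
        have h := taylor_aux hxpos hypos hR
        simp only [hcq]
        rw [if_pos hxpos]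
        have hyx : (1-t)*x i + t*τ i - x i = t*(τ i - x i) := by ring
        have h2 := mul_le_mul_of_nonneg_left h hwpos.le
        calc w i * (((1-t)*x i + t*τ i) * Real.log (((1-t)*x i + t*τ i) / R i))
              - w i * (x i * Real.log (x i / R i))
            = w i * (((1-t)*x i + t*τ i) * Real.log (((1-t)*x i + t*τ i) / R i)
                - x i * Real.log (x i / R i)) := by ring
          _ ≤ w i * ((((1-t)*x i + t*τ i) - x i) * (Real.log (x i / R i) + 1)
                + (((1-t)*x i + t*τ i) - x i)^2 / x i) := h2
          _ = t * (w i * (τ i - x i) * (Real.log (x i / R i) + 1))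
                + t^2 * (w i * ((τ i - x i)^2 / x i)) := by
              rw [hyx]; field_simp
    have h1 := hmin t ht0 ht1
    rw [Finset.sum_sub_distrib] at h2
    have h3 : ∑ i, (t * (w i * (τ i - x i) * (Real.log (x i / R i) + 1)) + t^2 * cq i)
        = t * Δ + t^2 * (∑ i, cq i) := by
      rw [Finset.sum_add_distrib, ← Finset.mul_sum, ← Finset.mul_sum]
      have e1 : ∑ i, w i * (τ i - x i) * (Real.log (x i / R i) + 1)
          = Δ + (∑ i, w i * τ i - ∑ i, w i * x i) := by
        have e2 : ∀ i ∈ (Finset.univ : Finset ι),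
            w i * (τ i - x i) * (Real.log (x i / R i) + 1)
            = (w i * (τ i * Real.log (x i / R i)) - w i * (x i * Real.log (x i / R i)))
              + (w i * τ i - w i * x i) := fun i _ => by ring
        rw [Finset.sum_congr rfl e2, Finset.sum_add_distrib, ← hΔ,
            Finset.sum_sub_distrib]
      rw [e1, ← hsum]
      ring
    rw [h3] at h2
    linarith
  have hCq0 : 0 ≤ ∑ i, cq i := Finset.sum_nonneg fun i _ => by
    rw [hcq]; dsimp only; split
    · exact mul_nonneg (hw i) (div_nonneg (sq_nonneg _) (hx i))
    · exact le_rfl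
  set Cq := ∑ i, cq i
  by_contra hcon
  push_neg at hcon
  have hΔneg : Δ < 0 := by
    rw [hΔ, Finset.sum_sub_distrib]; linarith
  set t : ℝ := min (1/2) (-Δ/(2*(Cq+1))) with htdef
  have ht0 : 0 < t := lt_min (by norm_num) (div_pos (by linarith) (by linarith))
  have ht1 : t < 1 := lt_of_le_of_lt (min_le_left _ _) (by norm_num)
  have h := hkey t ht0 ht1
  have htb : t ≤ -Δ/(2*(Cq+1)) := min_le_right _ _
  have hne : (2:ℝ)*(Cq+1) ≠ 0 := by linarith
  have h2 : (-Δ/(2*(Cq+1))) * (2*(Cq+1)) = -Δ := div_mul_cancel₀ _ hne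
  have hb : t^2 * Cq ≤ t * (-Δ/2) := by
    have h1 : t * (2*(Cq+1)) ≤ -Δ := by
      have := mul_le_mul_of_nonneg_right htb (by linarith : (0:ℝ) ≤ 2*(Cq+1))
      linarith [h2]
    nlinarith [sq_nonneg t]
  nlinarith
private noncomputable def Dkl {X : Type*} [Fintype X] (q r : X → ℝ) : ℝ :=
  ∑ σ, q σ * Real.log (q σ / r σ)

private lemma gibbs_aux {X : Type*} [Fintype X] (q r : X → ℝ)
    (hq : ∀ σ, 0 ≤ q σ) (hr : ∀ σ, 0 ≤ r σ) (h0 : ∀ σ, r σ = 0 → q σ = 0) :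
    (∑ σ, q σ) - (∑ σ, r σ) ≤ Dkl q r := by
  rw [Dkl, ← Finset.sum_sub_distrib]
  refine Finset.sum_le_sum fun σ _ => ?_
  rcases eq_or_lt_of_le (hq σ) with h | hqpos
  · rw [← h]; simp [hr σ]
  · have hrpos : 0 < r σ := by
      rcases eq_or_lt_of_le (hr σ) with h' | h'
      · exact absurd (h0 σ h'.symm) (by linarith)
      · exact h'
    have hlog : Real.log (r σ / q σ) ≤ r σ / q σ - 1 :=
      Real.log_le_sub_one_of_pos (by positivity)
    have heq : Real.log (q σ / r σ) = -Real.log (r σ / q σ) := by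
      rw [Real.log_div hqpos.ne' hrpos.ne', Real.log_div hrpos.ne' hqpos.ne']; ring
    rw [heq]
    have h2 : q σ * Real.log (r σ / q σ) ≤ r σ - q σ := by
      have := mul_le_mul_of_nonneg_left hlog hqpos.le
      have h3 : q σ * (r σ / q σ - 1) = r σ - q σ := by field_simp
      linarith
    linarith [h2]

private lemma split_sigma {A : Type*} [Fintype A] (p : A → ℝ) (hp : ∀ a, 0 ≤ p a)
    (f : A → ℝ) (hf : ∀ a, 0 ≤ f a) (Rσ : ℝ) (hR : 0 ≤ Rσ)
    (h0 : Rσ = 0 → ∀ a, f a * p a = 0) :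
    ∑ a, f a * p a * Real.log (f a / Rσ)
      = (∑ a, f a * p a * Real.log (f a / ∑ a', f a' * p a'))
        + (∑ a, f a * p a) * Real.log ((∑ a, f a * p a) / Rσ) := by
  have hnn : ∀ a ∈ (Finset.univ : Finset A), 0 ≤ f a * p a :=
    fun a _ => mul_nonneg (hf a) (hp a)
  have hQ0 : 0 ≤ ∑ a, f a * p a := Finset.sum_nonneg hnn
  rcases eq_or_lt_of_le hQ0 with h | hQpos
  · have hz : ∀ a ∈ (Finset.univ : Finset A), f a * p a = 0 :=
      fun a ha => (Finset.sum_eq_zero_iff_of_nonneg hnn).1 h.symm a ha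
    have e1 : ∑ a, f a * p a * Real.log (f a / Rσ) = 0 :=
      Finset.sum_eq_zero fun a ha => by rw [hz a ha, zero_mul]
    have e2 : ∑ a, f a * p a * Real.log (f a / ∑ a', f a' * p a') = 0 :=
      Finset.sum_eq_zero fun a ha => by rw [hz a ha, zero_mul]
    rw [e1, e2, ← h, zero_mul, add_zero]
  · have hRpos : 0 < Rσ := by
      rcases eq_or_lt_of_le hR with h' | h'
      · exfalso
        have := Finset.sum_eq_zero (fun a (ha : a ∈ Finset.univ) => h0 h'.symm a)
        rw [this] at hQpos; exact lt_irrefl 0 hQpos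
      · exact h'
    rw [Finset.sum_mul, ← Finset.sum_add_distrib]
    refine Finset.sum_congr rfl fun a _ => ?_
    rcases eq_or_lt_of_le (hnn a (Finset.mem_univ a)) with h' | hfp
    · rw [← h', zero_mul, zero_mul, zero_mul, add_zero]
    · have hfa : 0 < f a := by
        rcases eq_or_lt_of_le (hf a) with h'' | h''
        · exfalso; rw [← h'', zero_mul] at hfp; exact lt_irrefl 0 hfp
        · exact h''
      rw [Real.log_div hfa.ne' hRpos.ne', Real.log_div hfa.ne' hQpos.ne',
          Real.log_div hQpos.ne' hRpos.ne']
      ring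

/-- Convergence of Algorithm 2 (alternating minimization): starting from a
positive distribution `R₀`, alternately minimizing
`K[ρ,R] = ∑ ρ(𝐬|a)ρ(a) log(ρ(𝐬|a)/R(𝐬))` over `ρ ∈ 𝒱(P)` and over `R`
(yielding the marginal) produces a nonincreasing sequence `Kₙ` converging to
`𝒥(P) = min_{ρ ∈ 𝒱(P)} I(A;𝐒)`. -/
theorem stmt_17 {S A B : Type*} [Fintype S] [Fintype A] [Fintype B]
    [DecidableEq S] [DecidableEq B]
    (P : S → A → B → ℝ)
    (p : A → ℝ) (hp : ∀ a, 0 ≤ p a) (hp1 : ∑ a, p a = 1)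
    (V : Set (A → (B → S) → ℝ))
    (hV : V = {τ | (∀ a σ, 0 ≤ τ a σ) ∧ (∀ a, ∑ σ, τ a σ = 1) ∧
      ∀ a b s, ∑ σ ∈ Finset.univ.filter (fun σ : B → S => σ b = s), τ a σ
        = P s a b})
    (hVne : V.Nonempty)
    (K : (A → (B → S) → ℝ) → ((B → S) → ℝ) → ℝ)
    (hK : ∀ ρ R, K ρ R =
      ∑ σ : B → S, ∑ a, ρ a σ * p a * Real.log (ρ a σ / R σ))
    (I : (A → (B → S) → ℝ) → ℝ)
    (hI : ∀ ρ, I ρ = ∑ σ : B → S, ∑ a, ρ a σ * p a *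
      Real.log (ρ a σ / ∑ a', ρ a' σ * p a'))
    (R : ℕ → (B → S) → ℝ) (ρseq : ℕ → A → (B → S) → ℝ)
    (hR0pos : ∀ σ, 0 < R 0 σ) (hR01 : ∑ σ, R 0 σ = 1)
    (hρmin : ∀ n, ρseq (n + 1) ∈ V ∧
      ∀ τ ∈ V, K (ρseq (n + 1)) (R n) ≤ K τ (R n))
    (hRupd : ∀ n σ, R (n + 1) σ = ∑ a, ρseq (n + 1) a σ * p a) :
    Antitone (fun n => K (ρseq (n + 1)) (R (n + 1))) ∧
    Tendsto (fun n => K (ρseq (n + 1)) (R (n + 1))) atTop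
      (nhds (sInf {x : ℝ | ∃ ρ ∈ V, x = I ρ})) := by
  classical
  -- basic facts about V
  have hVnn : ∀ τ ∈ V, ∀ a σ, 0 ≤ τ a σ := by
    intro τ hτ; rw [hV] at hτ; exact hτ.1
  have hVsum : ∀ τ ∈ V, ∀ a, ∑ σ, τ a σ = 1 := by
    intro τ hτ; rw [hV] at hτ; exact hτ.2.1
  have hVconv : ∀ τ₁ ∈ V, ∀ τ₂ ∈ V, ∀ t : ℝ, 0 ≤ t → t ≤ 1 →
      (fun a σ => (1-t)*τ₁ a σ + t*τ₂ a σ) ∈ V := by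
    intro τ₁ h₁ τ₂ h₂ t ht0 ht1
    rw [hV] at h₁ h₂ ⊢
    refine ⟨fun a σ => add_nonneg (mul_nonneg (by linarith) (h₁.1 a σ))
      (mul_nonneg ht0 (h₂.1 a σ)), fun a => ?_, fun a b s => ?_⟩
    · simp only [Finset.sum_add_distrib, ← Finset.mul_sum, h₁.2.1 a, h₂.2.1 a]
      ring
    · simp only [Finset.sum_add_distrib, ← Finset.mul_sum, h₁.2.2 a b s, h₂.2.2 a b s]
      ring
  have hmem : ∀ n, ρseq (n+1) ∈ V := fun n => (hρmin n).1
  have hQ1 : ∀ τ ∈ V, ∑ σ : B → S, ∑ a, τ a σ * p a = 1 := by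
    intro τ hτ
    rw [Finset.sum_comm]
    calc ∑ a, ∑ σ : B → S, τ a σ * p a = ∑ a, (∑ σ : B → S, τ a σ) * p a := by
          refine Finset.sum_congr rfl fun a _ => ?_; rw [Finset.sum_mul]
      _ = ∑ a, p a := by
          refine Finset.sum_congr rfl fun a _ => ?_; rw [hVsum τ hτ a, one_mul]
      _ = 1 := hp1
  have hRsum : ∀ n, ∑ σ, R n σ = 1 := by
    intro n
    cases n with
    | zero => exact hR01
    | succ m =>
      have : ∑ σ, R (m+1) σ = ∑ σ : B → S, ∑ a, ρseq (m+1) a σ * p a :=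
        Finset.sum_congr rfl fun σ _ => hRupd m σ
      rw [this, hQ1 _ (hmem m)]
  have hRnn : ∀ n σ, 0 ≤ R n σ := by
    intro n σ
    cases n with
    | zero => exact (hR0pos σ).le
    | succ m =>
      rw [hRupd]
      exact Finset.sum_nonneg fun a _ => mul_nonneg (hVnn _ (hmem m) a σ) (hp a)
  -- dead σ's carry no mass
  have hdead : ∀ σ, ¬(∃ a, 0 < p a ∧ ∃ τ ∈ V, 0 < τ a σ) →
      ∀ τ ∈ V, ∀ a, τ a σ * p a = 0 := by
    intro σ hσ τ hτ a
    by_contra h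
    have hpa : 0 < p a := lt_of_le_of_ne (hp a) fun h' => h (by rw [← h', mul_zero])
    have hτa : 0 < τ a σ := lt_of_le_of_ne (hVnn τ hτ a σ)
      fun h' => h (by rw [← h', zero_mul])
    exact hσ ⟨a, hpa, τ, hτ, hτa⟩
  -- conversion between double sums and product sums
  have hconv : ∀ (g h : A → (B → S) → ℝ) (W : (B → S) → ℝ),
      ∑ σ : B → S, ∑ a, g a σ * p a * Real.log (h a σ / W σ)
        = ∑ i : (B → S) × A, p i.2 * (g i.2 i.1 * Real.log (h i.2 i.1 / W i.1)) := by
    intro g h W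
    rw [Fintype.sum_prod_type]
    exact Finset.sum_congr rfl fun σ _ => Finset.sum_congr rfl fun a _ => by ring
  -- positivity of minimizers on live coordinates
  have hstep : ∀ n, (∀ σ, (∃ a, 0 < p a ∧ ∃ τ ∈ V, 0 < τ a σ) → 0 < R n σ) →
      ∀ a σ, 0 < p a → ∀ τ₀ ∈ V, 0 < τ₀ a σ → 0 < ρseq (n+1) a σ := by
    intro n hRn a₀ σ₀ hpa₀ τ₀ hτ₀V hτ₀pos
    have hres := min_pos (ι := (B → S) × A)
      (fun i => p i.2) (fun i => R n i.1)
      (fun i => ρseq (n+1) i.2 i.1) (fun i => τ₀ i.2 i.1)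
      (fun i => hp i.2) (fun i => hVnn _ (hmem n) i.2 i.1)
      (fun i => hVnn _ hτ₀V i.2 i.1)
      (fun i hw hτ => hRn i.1 ⟨i.2, hw, τ₀, hτ₀V, hτ⟩)
      (fun i hw hx => hRn i.1 ⟨i.2, hw, ρseq (n+1), hmem n, hx⟩)
      ?_
    · exact hres (σ₀, a₀) hpa₀ hτ₀pos
    · intro t ht0 ht1
      have hmem' := hVconv _ (hmem n) _ hτ₀V t ht0.le ht1.le
      have hle := (hρmin n).2 _ hmem'
      rw [hK, hK, hconv, hconv] at hle
      exact hle
  have hRlive : ∀ n σ, (∃ a, 0 < p a ∧ ∃ τ ∈ V, 0 < τ a σ) → 0 < R n σ := by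
    intro n
    induction n with
    | zero => exact fun σ _ => hR0pos σ
    | succ m ih =>
      rintro σ ⟨a, hpa, τ, hτV, hτpos⟩
      rw [hRupd]
      exact Finset.sum_pos'
        (fun a' _ => mul_nonneg (hVnn _ (hmem m) a' σ) (hp a'))
        ⟨a, Finset.mem_univ a, mul_pos (hstep m ih a σ hpa τ hτV hτpos) hpa⟩
  have hρpos : ∀ n a σ, 0 < p a → ∀ τ₀ ∈ V, 0 < τ₀ a σ → 0 < ρseq (n+1) a σ :=
    fun n => hstep n (hRlive n)
  -- split K = I + Dkl
  have hsplitK : ∀ τ ∈ V, ∀ m, K τ (R m)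
      = I τ + Dkl (fun σ => ∑ a, τ a σ * p a) (R m) := by
    intro τ hτ m
    rw [hK, hI, Dkl]
    have := split_sigma p hp
    rw [← Finset.sum_add_distrib]
    refine Finset.sum_congr rfl fun σ _ => ?_
    refine split_sigma p hp (fun a => τ a σ) (fun a => hVnn τ hτ a σ) (R m σ)
      (hRnn m σ) fun h0 a => ?_
    have : ¬(∃ a, 0 < p a ∧ ∃ τ' ∈ V, 0 < τ' a σ) := by
      intro hl; exact absurd (hRlive m σ hl) (by rw [h0]; exact lt_irrefl 0)
    exact hdead σ this τ hτ a
  have hDge : ∀ τ ∈ V, ∀ m, 0 ≤ Dkl (fun σ => ∑ a, τ a σ * p a) (R m) := by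
    intro τ hτ m
    have hg := gibbs_aux (fun σ => ∑ a, τ a σ * p a) (R m)
      (fun σ => Finset.sum_nonneg fun a _ => mul_nonneg (hVnn τ hτ a σ) (hp a))
      (hRnn m)
      (fun σ h0 => Finset.sum_eq_zero fun a _ => by
        have : ¬(∃ a, 0 < p a ∧ ∃ τ' ∈ V, 0 < τ' a σ) := by
          intro hl; exact absurd (hRlive m σ hl) (by rw [h0]; exact lt_irrefl 0)
        exact hdead σ this τ hτ a)
    rw [hQ1 τ hτ, hRsum m] at hg
    linarith
  have hKI : ∀ n, K (ρseq (n+1)) (R (n+1)) = I (ρseq (n+1)) := by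
    intro n
    rw [hK, hI]
    exact Finset.sum_congr rfl fun σ _ => by rw [hRupd]
  have hIK : ∀ m, ∀ τ ∈ V, I τ ≤ K τ (R m) := by
    intro m τ hτ
    rw [hsplitK τ hτ m]
    linarith [hDge τ hτ m]
  -- antitone
  have hanti : ∀ n, K (ρseq (n+1+1)) (R (n+1+1)) ≤ K (ρseq (n+1)) (R (n+1)) := by
    intro n
    calc K (ρseq (n+2)) (R (n+2)) = I (ρseq (n+2)) := hKI (n+1)
      _ ≤ K (ρseq (n+2)) (R (n+1)) := hIK (n+1) _ (hmem (n+1))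
      _ ≤ K (ρseq (n+1)) (R (n+1)) := (hρmin (n+1)).2 _ (hmem n)
  have hAnti : Antitone (fun n => K (ρseq (n+1)) (R (n+1))) :=
    antitone_nat_of_succ_le hanti
  -- first-order optimality (KKT)
  have hKKT : ∀ n, ∀ τ ∈ V, K (ρseq (n+1)) (R n) ≤
      ∑ σ : B → S, ∑ a, τ a σ * p a * Real.log (ρseq (n+1) a σ / R n σ) := by
    intro n τ hτ
    have hnorm : ∀ g ∈ V, ∑ i : (B → S) × A, p i.2 * g i.2 i.1 = 1 := by
      intro g hg
      rw [Fintype.sum_prod_type]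
      have : ∑ σ : B → S, ∑ a, p a * g a σ = ∑ σ : B → S, ∑ a, g a σ * p a :=
        Finset.sum_congr rfl fun σ _ => Finset.sum_congr rfl fun a _ => by ring
      rw [this, hQ1 g hg]
    have hres := min_linearize (ι := (B → S) × A)
      (fun i => p i.2) (fun i => R n i.1)
      (fun i => ρseq (n+1) i.2 i.1) (fun i => τ i.2 i.1)
      (fun i => hp i.2) (fun i => hVnn _ (hmem n) i.2 i.1)
      (fun i => hVnn _ hτ i.2 i.1)
      (fun i hw hτi => hρpos n i.2 i.1 hw τ hτ hτi)
      (fun i hw hx => hRlive n i.1 ⟨i.2, hw, ρseq (n+1), hmem n, hx⟩)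
      (by rw [hnorm _ (hmem n), hnorm _ hτ])
      ?_
    · rw [hK, hconv]
      rw [hconv τ (ρseq (n+1)) (R n)]
      exact hres
    · intro t ht0 ht1
      have hmem' := hVconv _ (hmem n) _ hτ t ht0.le ht1.le
      have hle := (hρmin n).2 _ hmem'
      rw [hK, hK, hconv, hconv] at hle
      exact hle
  -- splitting of the linearized functional
  have hMsplit : ∀ n, ∀ τ ∈ V,
      ∑ σ : B → S, ∑ a, τ a σ * p a * Real.log (ρseq (n+1) a σ / R n σ)
      = K τ (R n) - ∑ σ : B → S, ∑ a, τ a σ * p a *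
          Real.log (τ a σ / ρseq (n+1) a σ) := by
    intro n τ hτ
    rw [hK, ← Finset.sum_sub_distrib]
    refine Finset.sum_congr rfl fun σ _ => ?_
    rw [← Finset.sum_sub_distrib]
    refine Finset.sum_congr rfl fun a _ => ?_
    rcases eq_or_lt_of_le (mul_nonneg (hVnn τ hτ a σ) (hp a)) with h0 | hpos
    · rw [← h0]; ring
    · have hpa : 0 < p a := by
        rcases eq_or_lt_of_le (hp a) with h' | h'
        · exfalso; rw [← h', mul_zero] at hpos; exact lt_irrefl 0 hpos
        · exact h'
      have hτa : 0 < τ a σ := by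
        rcases eq_or_lt_of_le (hVnn τ hτ a σ) with h' | h'
        · exfalso; rw [← h', zero_mul] at hpos; exact lt_irrefl 0 hpos
        · exact h'
      have hρa : 0 < ρseq (n+1) a σ := hρpos n a σ hpa τ hτ hτa
      have hRa : 0 < R n σ := hRlive n σ ⟨a, hpa, τ, hτ, hτa⟩
      rw [Real.log_div hρa.ne' hRa.ne', Real.log_div hτa.ne' hRa.ne',
          Real.log_div hτa.ne' hρa.ne']
      ring
  -- log-sum: relative entropy of joints dominates that of marginals
  have hlogsum : ∀ n, ∀ τ ∈ V,
      Dkl (fun σ => ∑ a, τ a σ * p a) (R (n+1)) ≤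
      ∑ σ : B → S, ∑ a, τ a σ * p a * Real.log (τ a σ / ρseq (n+1) a σ) := by
    intro n τ hτ
    rw [Dkl]
    refine Finset.sum_le_sum fun σ _ => ?_
    have hls := log_sum_aux Finset.univ (fun a => τ a σ * p a)
      (fun a => ρseq (n+1) a σ * p a)
      (fun a _ => mul_nonneg (hVnn τ hτ a σ) (hp a))
      (fun a _ => mul_nonneg (hVnn _ (hmem n) a σ) (hp a))
      (fun a _ hg => ?_)
    · have he : ∑ a, ρseq (n+1) a σ * p a = R (n+1) σ := (hRupd n σ).symm
      rw [he] at hls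
      refine le_trans hls (le_of_eq (Finset.sum_congr rfl fun a _ => ?_))
      beta_reduce
      rcases eq_or_lt_of_le (mul_nonneg (hVnn τ hτ a σ) (hp a)) with h0 | hpos
      · rw [← h0]; ring
      · have hpa : 0 < p a := by
          rcases eq_or_lt_of_le (hp a) with h' | h'
          · exfalso; rw [← h', mul_zero] at hpos; exact lt_irrefl 0 hpos
          · exact h'
        have hτa : 0 < τ a σ := by
          rcases eq_or_lt_of_le (hVnn τ hτ a σ) with h' | h'
          · exfalso; rw [← h', zero_mul] at hpos; exact lt_irrefl 0 hpos
          · exact h'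
        have hρa : 0 < ρseq (n+1) a σ := hρpos n a σ hpa τ hτ hτa
        have harg : τ a σ * p a / (ρseq (n+1) a σ * p a) = τ a σ / ρseq (n+1) a σ := by
          rw [mul_div_mul_right _ _ hpa.ne']
        rw [harg]
    · -- ρ * p = 0 → τ * p = 0
      beta_reduce
      rcases eq_or_lt_of_le (hp a) with h' | hpa
      · rw [← h', mul_zero]
      · have hρ0 : ρseq (n+1) a σ = 0 := by
          rcases mul_eq_zero.1 hg with h'' | h''
          · exact h''
          · exact absurd h'' hpa.ne'
        have hτ0 : τ a σ = 0 := by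
          by_contra hc
          have hτa : 0 < τ a σ := lt_of_le_of_ne (hVnn τ hτ a σ) (Ne.symm hc)
          have := hρpos n a σ hpa τ hτ hτa
          rw [hρ0] at this; exact lt_irrefl 0 this
        rw [hτ0, zero_mul]
  -- the key telescoping inequality
  have hkey : ∀ n, ∀ τ ∈ V,
      K (ρseq (n+1)) (R (n+1)) + Dkl (fun σ => ∑ a, τ a σ * p a) (R (n+1))
        ≤ I τ + Dkl (fun σ => ∑ a, τ a σ * p a) (R n) := by
    intro n τ hτ
    have h1 : K (ρseq (n+1)) (R (n+1)) = I (ρseq (n+1)) := hKI n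
    have h2 : I (ρseq (n+1)) ≤ K (ρseq (n+1)) (R n) := hIK n _ (hmem n)
    have h3 := hKKT n τ hτ
    have h4 := hMsplit n τ hτ
    have h5 := hlogsum n τ hτ
    have h6 := hsplitK τ hτ n
    linarith
  -- nonnegativity of I on V
  have hInn : ∀ τ ∈ V, 0 ≤ I τ := by
    intro τ hτ
    rw [hI]
    refine Finset.sum_nonneg fun σ _ => ?_
    have hls := log_sum_aux Finset.univ (fun a => τ a σ * p a)
      (fun a => (∑ a', τ a' σ * p a') * p a)
      (fun a _ => mul_nonneg (hVnn τ hτ a σ) (hp a))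
      (fun a _ => mul_nonneg (Finset.sum_nonneg fun a' _ =>
        mul_nonneg (hVnn τ hτ a' σ) (hp a')) (hp a))
      (fun a _ hg => ?_)
    · have hsg : ∑ a, (∑ a', τ a' σ * p a') * p a = ∑ a', τ a' σ * p a' := by
        rw [← Finset.mul_sum, hp1, mul_one]
      rw [hsg] at hls
      have hQnn : 0 ≤ ∑ a', τ a' σ * p a' :=
        Finset.sum_nonneg fun a' _ => mul_nonneg (hVnn τ hτ a' σ) (hp a')
      have hzero : (∑ a, τ a σ * p a) * Real.log ((∑ a, τ a σ * p a) / ∑ a', τ a' σ * p a') = 0 := by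
        rcases eq_or_lt_of_le hQnn with h0 | hQpos
        · rw [← h0, zero_mul]
        · rw [div_self hQpos.ne', Real.log_one, mul_zero]
      rw [hzero] at hls
      refine le_trans hls (le_of_eq (Finset.sum_congr rfl fun a _ => ?_))
      beta_reduce
      rcases eq_or_lt_of_le (mul_nonneg (hVnn τ hτ a σ) (hp a)) with h0 | hpos
      · rw [← h0]; ring
      · have hpa : 0 < p a := by
          rcases eq_or_lt_of_le (hp a) with h' | h'
          · exfalso; rw [← h', mul_zero] at hpos; exact lt_irrefl 0 hpos
          · exact h'
        have hQpos : 0 < ∑ a', τ a' σ * p a' := by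
          refine Finset.sum_pos' (fun a' _ => mul_nonneg (hVnn τ hτ a' σ) (hp a')) ?_
          exact ⟨a, Finset.mem_univ a, hpos⟩
        have harg : τ a σ * p a / ((∑ a', τ a' σ * p a') * p a)
            = τ a σ / ∑ a', τ a' σ * p a' := by
          rw [mul_div_mul_right _ _ hpa.ne']
        rw [harg]
    · -- Q * p = 0 → τ * p = 0
      beta_reduce
      rcases mul_eq_zero.1 hg with h'' | h''
      · have : ∀ a' ∈ (Finset.univ : Finset A), τ a' σ * p a' = 0 :=
          (Finset.sum_eq_zero_iff_of_nonneg (fun a' _ =>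
            mul_nonneg (hVnn τ hτ a' σ) (hp a'))).1 h''
        exact this a (Finset.mem_univ a)
      · rw [h'', mul_zero]
  -- the infimum set
  have hSne : {x : ℝ | ∃ ρ ∈ V, x = I ρ}.Nonempty := by
    obtain ⟨c, hc⟩ := hVne
    exact ⟨I c, c, hc, rfl⟩
  have hSbdd : BddBelow {x : ℝ | ∃ ρ ∈ V, x = I ρ} := by
    refine ⟨0, fun x hx => ?_⟩
    obtain ⟨ρ', hρ', rfl⟩ := hx
    exact hInn ρ' hρ'
  have hlb : ∀ n, sInf {x : ℝ | ∃ ρ ∈ V, x = I ρ} ≤ K (ρseq (n+1)) (R (n+1)) := by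
    intro n
    rw [hKI n]
    exact csInf_le hSbdd ⟨ρseq (n+1), hmem n, rfl⟩
  have hbddK : BddBelow (Set.range fun n => K (ρseq (n+1)) (R (n+1))) := by
    refine ⟨sInf {x : ℝ | ∃ ρ ∈ V, x = I ρ}, fun x hx => ?_⟩
    obtain ⟨n, rfl⟩ := hx
    exact hlb n
  have htend := tendsto_atTop_ciInf hAnti hbddK
  have heq : (⨅ n, K (ρseq (n+1)) (R (n+1))) = sInf {x : ℝ | ∃ ρ ∈ V, x = I ρ} := by
    refine le_antisymm ?_ (le_ciInf fun n => hlb n)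
    refine le_csInf hSne ?_
    rintro x ⟨τ, hτV, rfl⟩
    by_contra hcon
    push_neg at hcon
    set L := ⨅ n, K (ρseq (n+1)) (R (n+1)) with hL
    set g0 := Dkl (fun σ => ∑ a, τ a σ * p a) (R 0) with hg0
    have htel : ∀ N : ℕ, ((N:ℝ)+1) * (K (ρseq (N+1)) (R (N+1)) - I τ) ≤ g0 := by
      intro N
      have hterm : ∀ n ∈ Finset.range (N+1),
          K (ρseq (N+1)) (R (N+1)) - I τ ≤
          Dkl (fun σ => ∑ a, τ a σ * p a) (R n)
            - Dkl (fun σ => ∑ a, τ a σ * p a) (R (n+1)) := by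
        intro n hn
        have hle : K (ρseq (N+1)) (R (N+1)) ≤ K (ρseq (n+1)) (R (n+1)) := by
          have := hAnti (Nat.le_of_lt_succ (Finset.mem_range.1 hn))
          exact this
        have := hkey n τ hτV
        linarith
      have hs := Finset.sum_le_sum hterm
      rw [Finset.sum_const, Finset.card_range] at hs
      have hts : ∑ n ∈ Finset.range (N+1),
          (Dkl (fun σ => ∑ a, τ a σ * p a) (R n)
            - Dkl (fun σ => ∑ a, τ a σ * p a) (R (n+1)))
          = g0 - Dkl (fun σ => ∑ a, τ a σ * p a) (R (N+1)) :=
        Finset.sum_range_sub' (fun n => Dkl (fun σ => ∑ a, τ a σ * p a) (R n)) (N+1)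
      rw [hts] at hs
      have hDnn := hDge τ hτV (N+1)
      have : (N+1 : ℕ) • (K (ρseq (N+1)) (R (N+1)) - I τ)
          = ((N:ℝ)+1) * (K (ρseq (N+1)) (R (N+1)) - I τ) := by
        rw [nsmul_eq_mul]; push_cast; ring
      rw [this] at hs
      linarith
    have hε : 0 < L - I τ := by linarith
    obtain ⟨N, hN⟩ := exists_nat_gt (g0 / (L - I τ))
    have hKN : L ≤ K (ρseq (N+1)) (R (N+1)) := ciInf_le hbddK N
    have h1 : ((N:ℝ)+1) * (L - I τ) ≤ g0 := by
      have := htel N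
      nlinarith [hKN]
    have h2 : g0 < ((N:ℝ)+1) * (L - I τ) := by
      have hg0lt : g0 < ((N:ℝ)) * (L - I τ) := by
        rw [div_lt_iff₀ hε] at hN
        linarith
      nlinarith [hε]
    linarith
  rw [heq] at htend
  exact ⟨hAnti, htend⟩
end
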